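/- On GL(n,ℂ)×Matₙ(ℂ), for 1 ≤ i ≤ m ≤ n and z ∈ ℂ define L_{m,i}(z)(g,B) = (exp(zN)·g, exp(zN)·B·exp(−zN)) where N = ι_m((B_{(m)})^{i−1}), and R_{m,i}(z)(g,B) = (g·exp(−zN′), B) where N′ = ι_m((((−g^{−1}Bg))_{(m)})^{i−1}). Then: (i) each of L_{m,i} and R_{m,i} is a one-parameter group: L_{m,i}(z+w) = L_{m,i}(z)∘L_{m,i}(w) and R_{m,i}(z+w) = R_{m,i}(z)∘R_{m,i}(w); (ii) all transformations L_{m,i}(z) and R_{m′,i′}(w) pairwise commute, for all admissible indices and all z, w ∈ ℂ; (iii) for m = n the two families coincide up to reparametrization: R_{n,i}(z) = L_{n,i}((−1)^i z) for all i and z. (These are the two commuting Gelfand–Zeitlin actions on T*GL(n,ℂ), induced by the left and the right GL(n,ℂ)-actions, which together give an action of ℂ^{n²}.) -/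

import Mathlib

open Matrix

noncomputable section

/-- Upper-left `m × m` submatrix of an `n × n` matrix. -/
def ulMinor {n : ℕ} (m : ℕ) (hm : m ≤ n) (B : Matrix (Fin n) (Fin n) ℂ) :
    Matrix (Fin m) (Fin m) ℂ :=
  fun i j => B (Fin.castLE hm i) (Fin.castLE hm j)

/-- The embedding `ι_m` of `m × m` matrices into `n × n` matrices, placing the matrix in
the upper-left block and zeros elsewhere. -/
def iotaEmb {m : ℕ} (n : ℕ) (X : Matrix (Fin m) (Fin m) ℂ) : Matrix (Fin n) (Fin n) ℂ :=
  fun i j => if hi : (i : ℕ) < m then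
    (if hj : (j : ℕ) < m then X ⟨i, hi⟩ ⟨j, hj⟩ else 0) else 0

lemma iota_apply_pos {m n : ℕ} (X : Matrix (Fin m) (Fin m) ℂ) (i j : Fin n)
    (hi : (i : ℕ) < m) (hj : (j : ℕ) < m) :
    iotaEmb n X i j = X ⟨i, hi⟩ ⟨j, hj⟩ := by
  simp [iotaEmb, hi, hj]

lemma iota_apply_neg_left {m n : ℕ} (X : Matrix (Fin m) (Fin m) ℂ) (i j : Fin n)
    (hi : ¬ (i : ℕ) < m) : iotaEmb n X i j = 0 := by
  simp [iotaEmb, hi]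

lemma iota_apply_neg_right {m n : ℕ} (X : Matrix (Fin m) (Fin m) ℂ) (i j : Fin n)
    (hj : ¬ (j : ℕ) < m) : iotaEmb n X i j = 0 := by
  simp [iotaEmb, hj]

lemma iota_add {m n : ℕ} (X Y : Matrix (Fin m) (Fin m) ℂ) :
    iotaEmb n (X + Y) = iotaEmb n X + iotaEmb n Y := by
  funext i j; simp only [iotaEmb, Matrix.add_apply]; split_ifs <;> simp

lemma iota_sub {m n : ℕ} (X Y : Matrix (Fin m) (Fin m) ℂ) :
    iotaEmb n (X - Y) = iotaEmb n X - iotaEmb n Y := by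
  funext i j; simp only [iotaEmb, Matrix.sub_apply]; split_ifs <;> simp

lemma iota_smul {m n : ℕ} (z : ℂ) (X : Matrix (Fin m) (Fin m) ℂ) :
    iotaEmb n (z • X) = z • iotaEmb n X := by
  funext i j; simp only [iotaEmb, Matrix.smul_apply]; split_ifs <;> simp

lemma iota_id {m : ℕ} (X : Matrix (Fin m) (Fin m) ℂ) : iotaEmb m X = X := by
  funext i j; simp [iotaEmb, i.isLt, j.isLt]

lemma iota_comp {m m' n : ℕ} (h : m ≤ m') (X : Matrix (Fin m) (Fin m) ℂ) :
    iotaEmb n (iotaEmb m' X) = iotaEmb n X := by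
  funext i j
  simp only [iotaEmb]
  split_ifs <;> first | rfl | omega

lemma sum_fin_of_le {m n : ℕ} (h : m ≤ n) (f : Fin n → ℂ)
    (hf : ∀ k : Fin n, m ≤ (k : ℕ) → f k = 0) :
    ∑ k : Fin n, f k = ∑ k : Fin m, f (Fin.castLE h k) := by
  classical
  have he : ∑ k : Fin m, f (Fin.castLE h k)
      = ∑ k ∈ Finset.univ.map ⟨Fin.castLE h, Fin.castLE_injective h⟩, f k := by
    rw [Finset.sum_map]; rfl
  rw [he]
  refine (Finset.sum_subset (Finset.subset_univ _) ?_).symm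
  intro x _ hx
  refine hf x (Nat.le_of_not_lt fun hlt => ?_)
  exact hx (Finset.mem_map.mpr ⟨⟨(x : ℕ), hlt⟩, Finset.mem_univ _, Fin.ext rfl⟩)

lemma iota_mul {m n : ℕ} (h : m ≤ n) (X Y : Matrix (Fin m) (Fin m) ℂ) :
    iotaEmb n X * iotaEmb n Y = iotaEmb n (X * Y) := by
  funext i j
  rw [Matrix.mul_apply]
  by_cases hi : (i : ℕ) < m
  · by_cases hj : (j : ℕ) < m
    · rw [iota_apply_pos (X * Y) i j hi hj, Matrix.mul_apply,
        sum_fin_of_le h _ (fun k hk => by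
          rw [iota_apply_neg_right X i k (Nat.not_lt.mpr hk), zero_mul])]
      refine Finset.sum_congr rfl fun k _ => ?_
      rw [iota_apply_pos X i _ hi k.isLt, iota_apply_pos Y _ j k.isLt hj]
      rfl
    · rw [iota_apply_neg_right (X * Y) i j hj]
      exact Finset.sum_eq_zero fun k _ => by
        rw [iota_apply_neg_right Y k j hj, mul_zero]
  · rw [iota_apply_neg_left (X * Y) i j hi]
    exact Finset.sum_eq_zero fun k _ => by
      rw [iota_apply_neg_left X i k hi, zero_mul]

lemma iota_pow {m n : ℕ} (h : m ≤ n) (X : Matrix (Fin m) (Fin m) ℂ) (k : ℕ) :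
    (iotaEmb n X) ^ (k + 1) = iotaEmb n (X ^ (k + 1)) := by
  induction k with
  | zero => simp [pow_one]
  | succ k ih => rw [pow_succ, ih, iota_mul h, ← pow_succ]

lemma ulMinor_apply {m n : ℕ} (hm : m ≤ n) (B : Matrix (Fin n) (Fin n) ℂ) (i j : Fin m) :
    ulMinor m hm B i j = B (Fin.castLE hm i) (Fin.castLE hm j) := rfl

lemma ulMinor_add {m n : ℕ} (hm : m ≤ n) (A B : Matrix (Fin n) (Fin n) ℂ) :
    ulMinor m hm (A + B) = ulMinor m hm A + ulMinor m hm B := rfl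

lemma ulMinor_one {m n : ℕ} (hm : m ≤ n) : ulMinor m hm (1 : Matrix (Fin n) (Fin n) ℂ) = 1 := by
  funext i j
  simp only [ulMinor, Matrix.one_apply]
  by_cases hij : i = j
  · simp [hij]
  · rw [if_neg (fun hc => hij (Fin.castLE_injective hm hc)), if_neg hij]

lemma ulMinor_iota {m m' n : ℕ} (hm' : m' ≤ n) (X : Matrix (Fin m) (Fin m) ℂ) :
    ulMinor m' hm' (iotaEmb n X) = iotaEmb m' X := rfl

lemma ulMinor_comp {m m' n : ℕ} (h : m ≤ m') (h' : m' ≤ n) (B : Matrix (Fin n) (Fin n) ℂ) :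
    ulMinor m (h.trans h') B = ulMinor m h (ulMinor m' h' B) := rfl

lemma ulMinor_mul_iota_left {m m' n : ℕ} (h : m ≤ m') (h' : m' ≤ n)
    (Y : Matrix (Fin m) (Fin m) ℂ) (B : Matrix (Fin n) (Fin n) ℂ) :
    ulMinor m' h' (iotaEmb n Y * B) = iotaEmb m' Y * ulMinor m' h' B := by
  funext i j
  rw [ulMinor_apply, Matrix.mul_apply, Matrix.mul_apply,
    sum_fin_of_le h' _ (fun k hk => by
      rw [iota_apply_neg_right Y _ k (by omega), zero_mul])]
  rfl

lemma ulMinor_mul_iota_right {m m' n : ℕ} (h : m ≤ m') (h' : m' ≤ n)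
    (Y : Matrix (Fin m) (Fin m) ℂ) (B : Matrix (Fin n) (Fin n) ℂ) :
    ulMinor m' h' (B * iotaEmb n Y) = ulMinor m' h' B * iotaEmb m' Y := by
  funext i j
  rw [ulMinor_apply, Matrix.mul_apply, Matrix.mul_apply,
    sum_fin_of_le h' _ (fun k hk => by
      rw [iota_apply_neg_left Y k _ (by omega), mul_zero])]
  rfl

lemma ulMinor_conj {m m' n : ℕ} (h : m ≤ m') (h' : m' ≤ n)
    (Y Y' : Matrix (Fin m) (Fin m) ℂ) (B : Matrix (Fin n) (Fin n) ℂ) :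
    ulMinor m' h' ((1 + iotaEmb n Y) * B * (1 + iotaEmb n Y'))
      = (1 + iotaEmb m' Y) * ulMinor m' h' B * (1 + iotaEmb m' Y') := by
  have h1 : ∀ C : Matrix (Fin n) (Fin n) ℂ,
      ulMinor m' h' ((1 + iotaEmb n Y) * C) = (1 + iotaEmb m' Y) * ulMinor m' h' C := by
    intro C
    rw [add_mul, one_mul, ulMinor_add, ulMinor_mul_iota_left h h', add_mul, one_mul]
  rw [mul_add, mul_one, ulMinor_add, h1, ulMinor_mul_iota_right h h', h1, mul_add, mul_one,
    mul_assoc]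

section ExpLemmas

open NormedSpace

/-- `exp` of an embedded matrix. -/
lemma exp_iota {m n : ℕ} (h : m ≤ n) (X : Matrix (Fin m) (Fin m) ℂ) :
    exp (iotaEmb n X) = 1 + iotaEmb n (exp X - 1) := by
  letI : SeminormedRing (Matrix (Fin n) (Fin n) ℂ) := Matrix.linftyOpSemiNormedRing
  letI : NormedRing (Matrix (Fin n) (Fin n) ℂ) := Matrix.linftyOpNormedRing
  letI : NormedAlgebra ℂ (Matrix (Fin n) (Fin n) ℂ) := Matrix.linftyOpNormedAlgebra
  letI : SeminormedRing (Matrix (Fin m) (Fin m) ℂ) := Matrix.linftyOpSemiNormedRing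
  letI : NormedRing (Matrix (Fin m) (Fin m) ℂ) := Matrix.linftyOpNormedRing
  letI : NormedAlgebra ℂ (Matrix (Fin m) (Fin m) ℂ) := Matrix.linftyOpNormedAlgebra
  let L : Matrix (Fin m) (Fin m) ℂ →ₗ[ℂ] Matrix (Fin n) (Fin n) ℂ :=
    { toFun := iotaEmb n
      map_add' := iota_add
      map_smul' := iota_smul }
  let Lc : Matrix (Fin m) (Fin m) ℂ →L[ℂ] Matrix (Fin n) (Fin n) ℂ :=
    LinearMap.toContinuousLinearMap L
  have hs : Summable fun k : ℕ => (Nat.factorial k : ℂ)⁻¹ • X ^ k := expSeries_summable' X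
  have hs2 : Summable fun k : ℕ => (Nat.factorial k : ℂ)⁻¹ • (iotaEmb n X) ^ k := expSeries_summable' _
  have hsi : Summable fun k : ℕ => (Nat.factorial k : ℂ)⁻¹ • iotaEmb n (X ^ k) := by
    have := hs.map Lc Lc.continuous
    simpa [Function.comp_def, Lc, L, iota_smul] using this
  have hmap : iotaEmb n (exp X) = ∑' k : ℕ, (Nat.factorial k : ℂ)⁻¹ • iotaEmb n (X ^ k) := by
    have h1 : iotaEmb n (exp X) = Lc (∑' k : ℕ, (Nat.factorial k : ℂ)⁻¹ • X ^ k) := by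
      simp only [exp_eq_tsum ℂ]; rfl
    rw [h1, Lc.map_tsum hs]
    simp [Lc, L, iota_smul]
  rw [iota_sub, hmap, Summable.tsum_eq_zero_add hsi]
  simp only [exp_eq_tsum ℂ]
  rw [Summable.tsum_eq_zero_add hs2]
  have e0 : (Nat.factorial 0 : ℂ)⁻¹ • (iotaEmb n X) ^ 0 = 1 := by simp
  have e1 : (Nat.factorial 0 : ℂ)⁻¹ • iotaEmb n (X ^ 0) = iotaEmb (m := m) n (1 : Matrix (Fin m) (Fin m) ℂ) := by simp
  rw [e0, e1]
  have e2 : ∀ k : ℕ, (Nat.factorial (k+1) : ℂ)⁻¹ • (iotaEmb n X) ^ (k + 1)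
      = (Nat.factorial (k+1) : ℂ)⁻¹ • iotaEmb n (X ^ (k + 1)) := fun k => by rw [iota_pow h]
  rw [tsum_congr e2]
  abel

lemma exp_smul_iota {m n : ℕ} (h : m ≤ n) (z : ℂ) (X : Matrix (Fin m) (Fin m) ℂ) :
    exp (z • iotaEmb n X) = 1 + iotaEmb n (exp (z • X) - 1) := by
  rw [← iota_smul, exp_iota h]

lemma commute_exp {k : ℕ} {A B : Matrix (Fin k) (Fin k) ℂ} (hc : Commute A B) :
    Commute (exp A) B := by
  letI : SeminormedRing (Matrix (Fin k) (Fin k) ℂ) := Matrix.linftyOpSemiNormedRing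
  letI : NormedRing (Matrix (Fin k) (Fin k) ℂ) := Matrix.linftyOpNormedRing
  letI : NormedAlgebra ℂ (Matrix (Fin k) (Fin k) ℂ) := Matrix.linftyOpNormedAlgebra
  exact hc.exp_left

lemma exp_smul_add {k : ℕ} (N : Matrix (Fin k) (Fin k) ℂ) (z w : ℂ) :
    exp ((z + w) • N) = exp (z • N) * exp (w • N) := by
  rw [add_smul]
  exact Matrix.exp_add_of_commute _ _ (((Commute.refl N).smul_left z).smul_right w)

lemma exp_mul_exp_neg {k : ℕ} (N : Matrix (Fin k) (Fin k) ℂ) (z : ℂ) :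
    exp (z • N) * exp ((-z) • N) = 1 := by
  rw [← exp_smul_add, add_neg_cancel, zero_smul, exp_zero]

lemma exp_neg_mul_exp {k : ℕ} (N : Matrix (Fin k) (Fin k) ℂ) (z : ℂ) :
    exp ((-z) • N) * exp (z • N) = 1 := by
  rw [← exp_smul_add, neg_add_cancel, zero_smul, exp_zero]

lemma exp_smul_inv {k : ℕ} (N : Matrix (Fin k) (Fin k) ℂ) (z : ℂ) :
    (exp (z • N))⁻¹ = exp ((-z) • N) := by
  rw [neg_smul]
  exact (Matrix.exp_neg _).symm

lemma exp_conj_exp {k : ℕ} (N A : Matrix (Fin k) (Fin k) ℂ) (z : ℂ) :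
    exp (exp (z • N) * A * exp ((-z) • N))
      = exp (z • N) * exp A * exp ((-z) • N) := by
  rw [← exp_smul_inv]
  exact Matrix.exp_conj _ _ (Matrix.isUnit_exp _)

lemma conj_pow' {k : ℕ} {u v A : Matrix (Fin k) (Fin k) ℂ} (huv : u * v = 1) (hvu : v * u = 1)
    (j : ℕ) : (u * A * v) ^ j = u * A ^ j * v := by
  induction j with
  | zero => rw [pow_zero, pow_zero, mul_one, huv]
  | succ j ih =>
      rw [pow_succ, ih, pow_succ]
      calc u * A ^ j * v * (u * A * v) = u * A ^ j * (v * u) * (A * v) := by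
            simp only [mul_assoc]
        _ = u * (A ^ j * A) * v := by rw [hvu, mul_one]; simp only [mul_assoc]
        _ = u * (A ^ j * A) * v := rfl

end ExpLemmas

section KeyLemmas

open NormedSpace

lemma ulMinor_exp_conj {m m' n : ℕ} (h : m ≤ m') (h' : m' ≤ n) (z w : ℂ)
    (X : Matrix (Fin m) (Fin m) ℂ) (B : Matrix (Fin n) (Fin n) ℂ) :
    ulMinor m' h' (exp (z • iotaEmb n X) * B * exp (w • iotaEmb n X))
      = exp (z • iotaEmb m' X) * ulMinor m' h' B * exp (w • iotaEmb m' X) := by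
  rw [exp_smul_iota (h.trans h') z X, exp_smul_iota (h.trans h') w X,
    exp_smul_iota h z X, exp_smul_iota h w X]
  exact ulMinor_conj h h' _ _ B

lemma iota_exp_conj {m m' n : ℕ} (h : m ≤ m') (h' : m' ≤ n) (z w : ℂ)
    (X : Matrix (Fin m) (Fin m) ℂ) (W : Matrix (Fin m') (Fin m') ℂ) :
    iotaEmb n (exp (z • iotaEmb m' X) * W * exp (w • iotaEmb m' X))
      = exp (z • iotaEmb n X) * iotaEmb n W * exp (w • iotaEmb n X) := by
  rw [exp_smul_iota h z X, exp_smul_iota h w X,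
    exp_smul_iota (h.trans h') z X, exp_smul_iota (h.trans h') w X]
  set Y := exp (z • X) - 1 with hY
  set Y' := exp (w • X) - 1 with hY'
  have expand : ∀ (k : ℕ) (a b W' : Matrix (Fin k) (Fin k) ℂ),
      (1 + a) * W' * (1 + b) = W' + a * W' + (W' * b + a * (W' * b)) := by
    intros k a b W'
    noncomm_ring
  rw [expand, expand]
  have t1 : iotaEmb n (iotaEmb m' Y * W) = iotaEmb n Y * iotaEmb n W := by
    rw [← iota_mul h', iota_comp h]
  have t2 : iotaEmb n (W * iotaEmb m' Y') = iotaEmb n W * iotaEmb n Y' := by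
    rw [← iota_mul h', iota_comp h]
  have t3 : iotaEmb n (iotaEmb m' Y * (W * iotaEmb m' Y'))
      = iotaEmb n Y * (iotaEmb n W * iotaEmb n Y') := by
    rw [← iota_mul h', ← iota_mul h', iota_comp h, iota_comp h]
  rw [iota_add, iota_add, iota_add, t1, t2, t3]

/-- Conjugating by the exponential of an embedded power of the `m'`-minor preserves the
`m`-minor for `m ≤ m'`. -/
lemma ulMinor_flow_invariant {m m' n : ℕ} (h : m ≤ m') (hm : m ≤ n) (hm' : m' ≤ n)
    (j : ℕ) (z : ℂ) (B : Matrix (Fin n) (Fin n) ℂ) :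
    ulMinor m hm (exp (z • iotaEmb n ((ulMinor m' hm' B) ^ j)) * B *
        exp ((-z) • iotaEmb n ((ulMinor m' hm' B) ^ j)))
      = ulMinor m hm B := by
  set A := ulMinor m' hm' B with hA
  have h0 : ulMinor m' hm' (exp (z • iotaEmb n (A ^ j)) * B *
      exp ((-z) • iotaEmb n (A ^ j))) = A := by
    rw [ulMinor_exp_conj le_rfl hm' z (-z) (A ^ j) B, iota_id, ← hA]
    have hc : Commute (exp (z • A ^ j)) A :=
      commute_exp (((Commute.refl A).pow_left j).smul_left z)
    rw [hc.eq, mul_assoc, exp_mul_exp_neg, mul_one]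
  rw [ulMinor_comp h hm', h0, ← ulMinor_comp h hm']

/-- How the embedded power of the `m'`-minor transforms under conjugation by the exponential
of an embedded power of the `m`-minor, for `m ≤ m'`. -/
lemma iotaN_conj {m m' n : ℕ} (h : m ≤ m') (hm : m ≤ n) (hm' : m' ≤ n)
    (j j' : ℕ) (z : ℂ) (B : Matrix (Fin n) (Fin n) ℂ) :
    iotaEmb n ((ulMinor m' hm' (exp (z • iotaEmb n ((ulMinor m hm B) ^ j)) * B *
        exp ((-z) • iotaEmb n ((ulMinor m hm B) ^ j)))) ^ j')
      = exp (z • iotaEmb n ((ulMinor m hm B) ^ j)) *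
          iotaEmb n ((ulMinor m' hm' B) ^ j') *
          exp ((-z) • iotaEmb n ((ulMinor m hm B) ^ j)) := by
  set X := (ulMinor m hm B) ^ j with hX
  rw [ulMinor_exp_conj h hm' z (-z) X B]
  rw [conj_pow' (exp_mul_exp_neg _ z) (exp_neg_mul_exp _ z) j']
  exact iota_exp_conj h hm' z (-z) X _

end KeyLemmas

/-- The left Gelfand–Zeitlin flow `L_{m,i}(z)` on `T*GL(n,ℂ) ≅ GL(n,ℂ) × Matₙ(ℂ)`. -/
def gzL {n : ℕ} (m i : ℕ) (hm : m ≤ n) (z : ℂ)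
    (p : Matrix (Fin n) (Fin n) ℂ × Matrix (Fin n) (Fin n) ℂ) :
    Matrix (Fin n) (Fin n) ℂ × Matrix (Fin n) (Fin n) ℂ :=
  let N := iotaEmb n ((ulMinor m hm p.2) ^ (i - 1))
  (NormedSpace.exp (z • N) * p.1,
   NormedSpace.exp (z • N) * p.2 * NormedSpace.exp ((-z) • N))

/-- The right Gelfand–Zeitlin flow `R_{m,i}(z)` on `T*GL(n,ℂ) ≅ GL(n,ℂ) × Matₙ(ℂ)`. -/
def gzR {n : ℕ} (m i : ℕ) (hm : m ≤ n) (z : ℂ)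
    (p : Matrix (Fin n) (Fin n) ℂ × Matrix (Fin n) (Fin n) ℂ) :
    Matrix (Fin n) (Fin n) ℂ × Matrix (Fin n) (Fin n) ℂ :=
  let N' := iotaEmb n ((ulMinor m hm (-(p.1⁻¹ * p.2 * p.1))) ^ (i - 1))
  (p.1 * NormedSpace.exp ((-z) • N'), p.2)

section Flows

open NormedSpace

lemma exp_cancel₁ {k : ℕ} (N A : Matrix (Fin k) (Fin k) ℂ) (z : ℂ) :
    exp ((-z) • N) * (exp (z • N) * A) = A := by
  rw [← mul_assoc, exp_neg_mul_exp, one_mul]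

lemma exp_cancel₂ {k : ℕ} (N A : Matrix (Fin k) (Fin k) ℂ) (z : ℂ) :
    exp (z • N) * (exp ((-z) • N) * A) = A := by
  rw [← mul_assoc, exp_mul_exp_neg, one_mul]

lemma gzL_eq {n : ℕ} (m i : ℕ) (hm : m ≤ n) (z : ℂ)
    (p : Matrix (Fin n) (Fin n) ℂ × Matrix (Fin n) (Fin n) ℂ) :
    gzL m i hm z p = (exp (z • iotaEmb n ((ulMinor m hm p.2) ^ (i - 1))) * p.1,
      exp (z • iotaEmb n ((ulMinor m hm p.2) ^ (i - 1))) * p.2 *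
        exp ((-z) • iotaEmb n ((ulMinor m hm p.2) ^ (i - 1)))) := rfl

lemma gzR_eq {n : ℕ} (m i : ℕ) (hm : m ≤ n) (z : ℂ)
    (p : Matrix (Fin n) (Fin n) ℂ × Matrix (Fin n) (Fin n) ℂ) :
    gzR m i hm z p = (p.1 *
      exp ((-z) • iotaEmb n ((ulMinor m hm (-(p.1⁻¹ * p.2 * p.1))) ^ (i - 1))), p.2) := rfl

lemma neg_conj_eq {k : ℕ} (p1 p2 N' : Matrix (Fin k) (Fin k) ℂ) (w : ℂ) :
    -((p1 * exp ((-w) • N'))⁻¹ * p2 * (p1 * exp ((-w) • N')))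
      = exp (w • N') * -(p1⁻¹ * p2 * p1) * exp ((-w) • N') := by
  rw [Matrix.mul_inv_rev]
  have hFinv : (exp ((-w) • N'))⁻¹ = exp (w • N') := by
    have := exp_smul_inv N' (-w); rwa [neg_neg] at this
  rw [hFinv]
  noncomm_ring

lemma gzL_add {n : ℕ} (m i : ℕ) (hm : m ≤ n) (z w : ℂ)
    (p : Matrix (Fin n) (Fin n) ℂ × Matrix (Fin n) (Fin n) ℂ) :
    gzL m i hm (z + w) p = gzL m i hm z (gzL m i hm w p) := by
  set N := iotaEmb n ((ulMinor m hm p.2) ^ (i - 1)) with hN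
  have hinv : ulMinor m hm (exp (w • N) * p.2 * exp ((-w) • N)) = ulMinor m hm p.2 :=
    ulMinor_flow_invariant le_rfl hm hm (i - 1) w p.2
  simp only [gzL_eq, ← hN, hinv, Prod.mk.injEq]
  constructor
  · rw [exp_smul_add, mul_assoc]
  · rw [show -(z + w) = (-w) + (-z) by ring, exp_smul_add, exp_smul_add]
    simp only [mul_assoc]

lemma gzR_add {n : ℕ} (m i : ℕ) (hm : m ≤ n) (z w : ℂ)
    (p : Matrix (Fin n) (Fin n) ℂ × Matrix (Fin n) (Fin n) ℂ) :
    gzR m i hm (z + w) p = gzR m i hm z (gzR m i hm w p) := by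
  set B := -(p.1⁻¹ * p.2 * p.1) with hB
  set N' := iotaEmb n ((ulMinor m hm B) ^ (i - 1)) with hN'
  have hB1 : -((p.1 * exp ((-w) • N'))⁻¹ * p.2 * (p.1 * exp ((-w) • N')))
      = exp (w • N') * B * exp ((-w) • N') := neg_conj_eq p.1 p.2 N' w
  have hinv : ulMinor m hm (exp (w • N') * B * exp ((-w) • N')) = ulMinor m hm B :=
    ulMinor_flow_invariant le_rfl hm hm (i - 1) w B
  simp only [gzR_eq, ← hB, ← hN', hB1, hinv, Prod.mk.injEq]
  constructor
  · rw [show -(z + w) = (-w) + (-z) by ring, exp_smul_add, mul_assoc]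
  · trivial

end Flows

section Comm

open NormedSpace

lemma gzLL_comm {n : ℕ} (m i m' i' : ℕ) (h : m ≤ m') (hm : m ≤ n) (hm' : m' ≤ n) (z w : ℂ)
    (p : Matrix (Fin n) (Fin n) ℂ × Matrix (Fin n) (Fin n) ℂ) :
    gzL m i hm z (gzL m' i' hm' w p) = gzL m' i' hm' w (gzL m i hm z p) := by
  set N := iotaEmb n ((ulMinor m hm p.2) ^ (i - 1)) with hN
  set N' := iotaEmb n ((ulMinor m' hm' p.2) ^ (i' - 1)) with hN'
  have hinv : ulMinor m hm (exp (w • N') * p.2 * exp ((-w) • N')) = ulMinor m hm p.2 :=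
    ulMinor_flow_invariant h hm hm' (i' - 1) w p.2
  have hconj : iotaEmb n ((ulMinor m' hm' (exp (z • N) * p.2 * exp ((-z) • N))) ^ (i' - 1))
      = exp (z • N) * N' * exp ((-z) • N) :=
    iotaN_conj h hm hm' (i - 1) (i' - 1) z p.2
  have hsm : ∀ c : ℂ, c • (exp (z • N) * N' * exp ((-z) • N))
      = exp (z • N) * (c • N') * exp ((-z) • N) := fun c => by
    rw [Matrix.mul_smul, Matrix.smul_mul]
  have hew : exp (w • (exp (z • N) * N' * exp ((-z) • N)))
      = exp (z • N) * exp (w • N') * exp ((-z) • N) := by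
    rw [hsm, exp_conj_exp]
  have hewn : exp ((-w) • (exp (z • N) * N' * exp ((-z) • N)))
      = exp (z • N) * exp ((-w) • N') * exp ((-z) • N) := by
    rw [hsm, exp_conj_exp]
  simp only [gzL_eq, ← hN, ← hN', hinv, hconj, hew, hewn, Prod.mk.injEq]
  constructor
  · simp only [mul_assoc, exp_cancel₁]
  · simp only [mul_assoc, exp_cancel₁, exp_cancel₂]

lemma gzRR_comm {n : ℕ} (m i m' i' : ℕ) (h : m ≤ m') (hm : m ≤ n) (hm' : m' ≤ n) (z w : ℂ)
    (p : Matrix (Fin n) (Fin n) ℂ × Matrix (Fin n) (Fin n) ℂ) :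
    gzR m i hm z (gzR m' i' hm' w p) = gzR m' i' hm' w (gzR m i hm z p) := by
  set B := -(p.1⁻¹ * p.2 * p.1) with hB
  set N := iotaEmb n ((ulMinor m hm B) ^ (i - 1)) with hN
  set N' := iotaEmb n ((ulMinor m' hm' B) ^ (i' - 1)) with hN'
  have hB1 : -((p.1 * exp ((-w) • N'))⁻¹ * p.2 * (p.1 * exp ((-w) • N')))
      = exp (w • N') * B * exp ((-w) • N') := neg_conj_eq p.1 p.2 N' w
  have hB2 : -((p.1 * exp ((-z) • N))⁻¹ * p.2 * (p.1 * exp ((-z) • N)))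
      = exp (z • N) * B * exp ((-z) • N) := neg_conj_eq p.1 p.2 N z
  have hinv : ulMinor m hm (exp (w • N') * B * exp ((-w) • N')) = ulMinor m hm B :=
    ulMinor_flow_invariant h hm hm' (i' - 1) w B
  have hconj : iotaEmb n ((ulMinor m' hm' (exp (z • N) * B * exp ((-z) • N))) ^ (i' - 1))
      = exp (z • N) * N' * exp ((-z) • N) :=
    iotaN_conj h hm hm' (i - 1) (i' - 1) z B
  have hewn : exp ((-w) • (exp (z • N) * N' * exp ((-z) • N)))
      = exp (z • N) * exp ((-w) • N') * exp ((-z) • N) := by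
    rw [show (-w) • (exp (z • N) * N' * exp ((-z) • N))
        = exp (z • N) * ((-w) • N') * exp ((-z) • N) by rw [Matrix.mul_smul, Matrix.smul_mul],
      exp_conj_exp]
  simp only [gzR_eq, ← hB, ← hN, ← hN', hB1, hB2, hinv, hconj, hewn, Prod.mk.injEq]
  refine ⟨?_, trivial⟩
  simp only [mul_assoc, exp_cancel₁]

lemma gzLR_comm {n : ℕ} (m i m' i' : ℕ) (hm : m ≤ n) (hm' : m' ≤ n) (z w : ℂ)
    (p : Matrix (Fin n) (Fin n) ℂ × Matrix (Fin n) (Fin n) ℂ) :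
    gzL m i hm z (gzR m' i' hm' w p) = gzR m' i' hm' w (gzL m i hm z p) := by
  set N := iotaEmb n ((ulMinor m hm p.2) ^ (i - 1)) with hN
  have hBt : -((exp (z • N) * p.1)⁻¹ * (exp (z • N) * p.2 * exp ((-z) • N)) *
      (exp (z • N) * p.1)) = -(p.1⁻¹ * p.2 * p.1) := by
    rw [Matrix.mul_inv_rev, exp_smul_inv]
    congr 1
    simp only [mul_assoc, exp_cancel₁]
  simp only [gzL_eq, gzR_eq, ← hN, hBt, Prod.mk.injEq]
  exact ⟨(mul_assoc _ _ _).symm, trivial⟩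

end Comm

section Final

open NormedSpace

lemma gz_n_reparam {n : ℕ} (i : ℕ) (h1 : 1 ≤ i) (z : ℂ)
    (p : Matrix (Fin n) (Fin n) ℂ × Matrix (Fin n) (Fin n) ℂ) (hp : IsUnit p.1) :
    gzR n i le_rfl z p = gzL n i le_rfl ((-1 : ℂ) ^ i * z) p := by
  have hdet : IsUnit p.1.det := (Matrix.isUnit_iff_isUnit_det _).mp hp
  have h1' : p.1 * p.1⁻¹ = 1 := Matrix.mul_nonsing_inv _ hdet
  have h2' : p.1⁻¹ * p.1 = 1 := Matrix.nonsing_inv_mul _ hdet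
  set c := (-1 : ℂ) ^ i * z with hc
  have e3 : (-(p.1⁻¹ * p.2 * p.1)) ^ (i - 1)
      = (-1 : ℂ) ^ (i - 1) • (p.1⁻¹ * p.2 ^ (i - 1) * p.1) := by
    rw [show -(p.1⁻¹ * p.2 * p.1) = (-1 : ℂ) • (p.1⁻¹ * p.2 * p.1) from (neg_one_smul ℂ _).symm,
      smul_pow, conj_pow' h2' h1' (i - 1)]
  have e4 : (-z) • ((-1 : ℂ) ^ (i - 1) • (p.1⁻¹ * p.2 ^ (i - 1) * p.1))
      = p.1⁻¹ * (c • p.2 ^ (i - 1)) * p.1 := by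
    rw [smul_smul]
    have hsc : -z * (-1 : ℂ) ^ (i - 1) = c := by
      rw [hc]
      conv_rhs => rw [show i = (i - 1) + 1 from (Nat.succ_pred_eq_of_pos h1).symm]
      rw [pow_succ]; ring
    rw [hsc, mul_smul_comm, smul_mul_assoc]
  have keyexp : exp ((-z) • iotaEmb n ((ulMinor n le_rfl (-(p.1⁻¹ * p.2 * p.1))) ^ (i - 1)))
      = p.1⁻¹ * exp (c • p.2 ^ (i - 1)) * p.1 := by
    rw [show iotaEmb n ((ulMinor n le_rfl (-(p.1⁻¹ * p.2 * p.1))) ^ (i - 1))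
        = (-(p.1⁻¹ * p.2 * p.1)) ^ (i - 1) from iota_id _, e3, e4]
    exact Matrix.exp_conj' p.1 _ hp
  have hL : iotaEmb n ((ulMinor n le_rfl p.2) ^ (i - 1)) = p.2 ^ (i - 1) := iota_id _
  simp only [gzR_eq, gzL_eq, keyexp, hL, ← hc, Prod.mk.injEq]
  constructor
  · rw [← mul_assoc, ← mul_assoc, h1', one_mul]
  · have hcm : Commute (exp (c • p.2 ^ (i - 1))) p.2 :=
      commute_exp (((Commute.refl p.2).pow_left (i - 1)).smul_left c)
    have : exp (c • p.2 ^ (i - 1)) * p.2 * exp ((-c) • p.2 ^ (i - 1)) = p.2 := by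
      rw [hcm.eq, mul_assoc, exp_mul_exp_neg, mul_one]
    exact this.symm

end Final


/-- The two commuting Gelfand–Zeitlin actions on `T*GL(n,ℂ)`: (i) `L_{m,i}` and `R_{m,i}`
are one-parameter groups; (ii) all the transformations `L_{m,i}(z)`, `R_{m',i'}(w)`
pairwise commute; (iii) for `m = n` the two families coincide up to reparametrization:
`R_{n,i}(z) = L_{n,i}((−1)^i z)`. -/
theorem gz_actions_on_cotangent_GL (n : ℕ) (hn : 1 ≤ n) :
    (∀ (m i : ℕ), 1 ≤ i → i ≤ m → ∀ hm : m ≤ n, ∀ (z w : ℂ)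
      (p : Matrix (Fin n) (Fin n) ℂ × Matrix (Fin n) (Fin n) ℂ), IsUnit p.1 →
        gzL m i hm (z + w) p = gzL m i hm z (gzL m i hm w p) ∧
        gzR m i hm (z + w) p = gzR m i hm z (gzR m i hm w p)) ∧
    (∀ (m i m' i' : ℕ), 1 ≤ i → i ≤ m → ∀ hm : m ≤ n, 1 ≤ i' → i' ≤ m' → ∀ hm' : m' ≤ n,
      ∀ (z w : ℂ) (p : Matrix (Fin n) (Fin n) ℂ × Matrix (Fin n) (Fin n) ℂ), IsUnit p.1 →
        gzL m i hm z (gzL m' i' hm' w p) = gzL m' i' hm' w (gzL m i hm z p) ∧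
        gzR m i hm z (gzR m' i' hm' w p) = gzR m' i' hm' w (gzR m i hm z p) ∧
        gzL m i hm z (gzR m' i' hm' w p) = gzR m' i' hm' w (gzL m i hm z p)) ∧
    (∀ (i : ℕ), 1 ≤ i → ∀ hi : i ≤ n, ∀ (z : ℂ)
      (p : Matrix (Fin n) (Fin n) ℂ × Matrix (Fin n) (Fin n) ℂ), IsUnit p.1 →
        gzR n i le_rfl z p = gzL n i le_rfl ((-1 : ℂ) ^ i * z) p) := by
  refine ⟨?_, ?_, ?_⟩
  · intro m i _ _ hm z w p _
    exact ⟨gzL_add m i hm z w p, gzR_add m i hm z w p⟩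
  · intro m i m' i' _ _ hm _ _ hm' z w p _
    refine ⟨?_, ?_, gzLR_comm m i m' i' hm hm' z w p⟩
    · rcases le_total m m' with h | h
      · exact gzLL_comm m i m' i' h hm hm' z w p
      · exact (gzLL_comm m' i' m i h hm' hm w z p).symm
    · rcases le_total m m' with h | h
      · exact gzRR_comm m i m' i' h hm hm' z w p
      · exact (gzRR_comm m' i' m i h hm' hm w z p).symm
  · intro i h1i _ z p hp
    exact gz_n_reparam i h1i z p hp
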